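/- In the simplex category Δ, for every n ≥ 0 the following square is a pushout: top map [0] → [n+2] the monotone map picking out the element 0 (the composite δ_{n+2} ⋯ δ₁), left map δ₀ : [0] → [1], right map δ₀ : [n+2] → [n+3], bottom map [1] → [n+3] the monotone injection with image {0, 1} (the composite δ_{n+3} ⋯ δ₂). -/

import Mathlib

open CategoryTheory

namespace SimplexCategoryPushoutAux

open SimplexCategory

/-- Auxiliary: given `h : [n+2] ⟶ X` and `k : [1] ⟶ X` with `k 1 = h 0`,
the map `[n+3] ⟶ X` sending `0 ↦ k 0` and `i+1 ↦ h i`. -/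
def desc {n : ℕ} {X : SimplexCategory} (h : mk (n + 2) ⟶ X) (k : mk 1 ⟶ X)
    (hk : k.toOrderHom 1 = h.toOrderHom 0) : mk (n + 3) ⟶ X :=
  SimplexCategory.Hom.mk
    { toFun := fun i => Fin.cases (k.toOrderHom 0) (fun j => h.toOrderHom j) i
      monotone' := by
        intro i j hij
        induction i using Fin.cases with
        | zero =>
          induction j using Fin.cases with
          | zero => exact le_rfl
          | succ j =>
            simp only [Fin.cases_zero, Fin.cases_succ]
            calc k.toOrderHom 0 ≤ k.toOrderHom 1 := k.toOrderHom.monotone (by decide)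
              _ = h.toOrderHom 0 := hk
              _ ≤ h.toOrderHom j := h.toOrderHom.monotone (Fin.zero_le _)
        | succ i =>
          induction j using Fin.cases with
          | zero => exact absurd hij (by simp [Fin.le_def])
          | succ j =>
            simp only [Fin.cases_succ]
            exact h.toOrderHom.monotone (Fin.succ_le_succ_iff.mp hij) }

end SimplexCategoryPushoutAux

/-- In the simplex category `Δ`, for every `n ≥ 0` the following square
is a pushout:
* top map `[0] → [n+2]`: the monotone map picking out the element `0`
  (the composite `δ_{n+2} ⋯ δ₁`),
* left map `δ₀ : [0] → [1]`,
* right map `δ₀ : [n+2] → [n+3]`,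
* bottom map `[1] → [n+3]`: the monotone injection with image `{0, 1}`
  (the composite `δ_{n+3} ⋯ δ₂`). -/
theorem isPushout_delta_zero (n : ℕ) :
    IsPushout
      (SimplexCategory.const (SimplexCategory.mk 0) (SimplexCategory.mk (n + 2)) 0)
      (SimplexCategory.δ (0 : Fin 2) : SimplexCategory.mk 0 ⟶ SimplexCategory.mk 1)
      (SimplexCategory.δ (0 : Fin (n + 4)) :
        SimplexCategory.mk (n + 2) ⟶ SimplexCategory.mk (n + 3))
      (SimplexCategory.mkOfSucc (0 : Fin (n + 3))) := by
  have w : (SimplexCategory.const (SimplexCategory.mk 0) (SimplexCategory.mk (n + 2)) 0) ≫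
      (SimplexCategory.δ (0 : Fin (n + 4))) =
      (SimplexCategory.δ (0 : Fin 2)) ≫ SimplexCategory.mkOfSucc (0 : Fin (n + 3)) := by
    apply SimplexCategory.Hom.ext
    apply OrderHom.ext
    funext i
    fin_cases i
    rfl
  have key : ∀ (s : Limits.PushoutCocone
      (SimplexCategory.const (SimplexCategory.mk 0) (SimplexCategory.mk (n + 2)) 0)
      (SimplexCategory.δ (0 : Fin 2))),
      s.inr.toOrderHom 1 = s.inl.toOrderHom 0 := by
    intro s
    have := congrArg (fun f => SimplexCategory.Hom.toOrderHom f 0) s.condition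
    simp only [SimplexCategory.comp_toOrderHom, OrderHom.comp_coe, Function.comp_apply,
      SimplexCategory.const_apply] at this
    exact this.symm
  have hδ : ∀ i : Fin (n + 3),
      (SimplexCategory.δ (0 : Fin (n + 4))).toOrderHom i = i.succ := by
    intro i
    simp [SimplexCategory.δ, Fin.succAbove]
  refine IsPushout.of_isColimit' ⟨w⟩ ?_
  refine Limits.PushoutCocone.IsColimit.mk w
    (fun s => SimplexCategoryPushoutAux.desc s.inl s.inr (key s)) ?_ ?_ ?_
  · intro s
    apply SimplexCategory.Hom.ext
    apply OrderHom.ext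
    funext i
    simp only [SimplexCategory.comp_toOrderHom, OrderHom.comp_coe, Function.comp_apply, hδ,
      SimplexCategoryPushoutAux.desc, SimplexCategory.Hom.toOrderHom_mk, OrderHom.coe_mk,
      Fin.cases_succ]
    rfl
  · intro s
    apply SimplexCategory.Hom.ext
    apply OrderHom.ext
    funext i
    fin_cases i
    · rfl
    · have h1 : (SimplexCategory.mkOfSucc (0 : Fin (n + 3))).toOrderHom 1 =
        (0 : Fin (n + 3)).succ := rfl
      simp only [SimplexCategory.comp_toOrderHom, OrderHom.comp_coe, Function.comp_apply, h1,
        SimplexCategoryPushoutAux.desc, SimplexCategory.Hom.toOrderHom_mk, OrderHom.coe_mk,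
        Fin.cases_succ]
      exact (key s).symm
  · intro s m h1 h2
    apply SimplexCategory.Hom.ext
    apply OrderHom.ext
    funext i
    dsimp only [SimplexCategoryPushoutAux.desc, SimplexCategory.Hom.toOrderHom_mk,
      OrderHom.coe_mk]
    induction i using Fin.cases with
    | zero =>
      have := congrArg (fun f => SimplexCategory.Hom.toOrderHom f 0) h2
      simp only [SimplexCategory.comp_toOrderHom, OrderHom.comp_coe,
        Function.comp_apply] at this
      exact this
    | succ i =>
      have := congrArg (fun f => SimplexCategory.Hom.toOrderHom f i) h1
      simp only [SimplexCategory.comp_toOrderHom, OrderHom.comp_coe, Function.comp_apply,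
        hδ] at this
      exact this
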